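/- Let F(y) = sqrt(h(y,y)) + β(y) be a Randers norm on ℝⁿ with ‖β‖_h < 1. Then its polar transform is F*(α) = [sqrt(h*(α,β)² + (1−‖β‖_h²)·‖α‖_h²) − h*(α,β)] / (1−‖β‖_h²), where h* is the dual inner product on (ℝⁿ)* and ‖α‖_h² = h*(α,α). -/

import Mathlib

set_option maxHeartbeats 1000000 in
/-- For a Randers norm `F y = ‖y‖ + ⟪b, y⟫` on a Euclidean space
(the inner ℝ product playing the role of `h`, the 1-form `β` represented via Riesz
by a vector `b` with `‖b‖ < 1`, and a dual covector `α` represented by a vector `a`,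
so that `h*(α,β) = ⟪a,b⟫`, `‖α‖ₕ = ‖a‖`), the polar transform
`F* α = sup_{y ≠ 0} α y / F y` equals
`(√(⟪a,b⟫² + (1−‖b‖²)‖a‖²) − ⟪a,b⟫)/(1−‖b‖²)`. -/
theorem stmt_17 (n : ℕ) (hn : 1 ≤ n) (b : EuclideanSpace ℝ (Fin n)) (hb : ‖b‖ < 1)
    (F : EuclideanSpace ℝ (Fin n) → ℝ)
    (hF : ∀ y, F y = ‖y‖ + inner ℝ b y) :
    ∀ a : EuclideanSpace ℝ (Fin n),
      IsLUB {q : ℝ | ∃ y : EuclideanSpace ℝ (Fin n), y ≠ 0 ∧ q = (inner ℝ a y : ℝ) / F y}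
        ((Real.sqrt ((inner ℝ a b : ℝ) ^ 2 + (1 - ‖b‖ ^ 2) * ‖a‖ ^ 2) - (inner ℝ a b : ℝ))
          / (1 - ‖b‖ ^ 2)) := by
  intro a
  have hb0 : (0:ℝ) ≤ ‖b‖ := norm_nonneg b
  set s : ℝ := (inner ℝ a b : ℝ) with hs
  set t : ℝ := ‖b‖ ^ 2 with ht
  have htpos : 0 < 1 - t := by nlinarith
  set D : ℝ := s ^ 2 + (1 - t) * ‖a‖ ^ 2 with hD
  have hDnn : 0 ≤ D := by positivity
  set c : ℝ := (Real.sqrt D - s) / (1 - t) with hc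
  have hr : Real.sqrt D ^ 2 = D := Real.sq_sqrt hDnn
  have hrs : s ≤ Real.sqrt D := by
    have h1 : s ^ 2 ≤ D := by nlinarith [sq_nonneg ‖a‖]
    have h2 := Real.sqrt_le_sqrt h1
    rw [Real.sqrt_sq_eq_abs] at h2
    exact (le_abs_self s).trans h2
  have hcnn : 0 ≤ c := div_nonneg (by linarith) htpos.le
  have key : (1 - t) * c ^ 2 + 2 * s * c = ‖a‖ ^ 2 := by
    rw [hc]
    field_simp
    nlinarith [hr]
  have hnorm : ‖a - c • b‖ = c := by
    have h2 : ‖a - c • b‖ ^ 2 = c ^ 2 := by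
      rw [@norm_sub_sq_real]
      have h3 : (inner ℝ a (c • b) : ℝ) = c * s := by
        rw [real_inner_smul_right]
      have h4 : ‖c • b‖ ^ 2 = c ^ 2 * t := by
        rw [norm_smul, ht]
        simp [abs_of_nonneg hcnn]
        ring
      rw [h3, h4]
      nlinarith [key]
    have h5 : 0 ≤ ‖a - c • b‖ := norm_nonneg _
    nlinarith [h2, h5, hcnn, sq_nonneg (‖a - c • b‖ - c)]
  have Fpos : ∀ y : EuclideanSpace ℝ (Fin n), y ≠ 0 → 0 < F y := by
    intro y hy
    have hyn : 0 < ‖y‖ := norm_pos_iff.mpr hy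
    have := abs_real_inner_le_norm b y
    rw [hF]
    nlinarith [abs_nonneg (inner ℝ b y : ℝ), neg_abs_le (inner ℝ b y : ℝ)]
  have hub : ∀ q ∈ {q : ℝ | ∃ y : EuclideanSpace ℝ (Fin n), y ≠ 0 ∧ q = (inner ℝ a y : ℝ) / F y},
      q ≤ c := by
    rintro q ⟨y, hy, rfl⟩
    have hFy := Fpos y hy
    rw [div_le_iff₀ hFy]
    have key2 : (inner ℝ a y : ℝ) = (inner ℝ (a - c • b) y : ℝ) + c * (inner ℝ b y : ℝ) := by
      rw [inner_sub_left, real_inner_smul_left]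
      ring
    have hCS : (inner ℝ (a - c • b) y : ℝ) ≤ c * ‖y‖ := by
      have := real_inner_le_norm (a - c • b) y
      rwa [hnorm] at this
    rw [hF]
    linarith
  have hmem : c ∈ {q : ℝ | ∃ y : EuclideanSpace ℝ (Fin n), y ≠ 0 ∧ q = (inner ℝ a y : ℝ) / F y} := by
    by_cases ha : a = 0
    · have hs0 : s = 0 := by simp [hs, ha, inner_zero_left]
      have hc0 : c = 0 := by
        rw [hc, hD, hs0, ha]
        simp
      refine ⟨EuclideanSpace.single ⟨0, hn⟩ 1, ?_, ?_⟩
      · intro h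
        have : ‖EuclideanSpace.single (⟨0, hn⟩ : Fin n) (1:ℝ)‖ = 1 := by
          rw [EuclideanSpace.norm_single]; simp
        rw [h] at this
        simp at this
      · rw [hc0, ha]
        simp [inner_zero_left]
    · have hcne : c ≠ 0 := by
        intro h
        apply ha
        have : ‖a - c • b‖ = 0 := by rw [hnorm, h]
        have h2 : a - c • b = 0 := by rwa [norm_eq_zero] at this
        have : a = c • b := by
          have := sub_eq_zero.mp h2
          exact this
        rw [this, h, zero_smul]
      have hcpos : 0 < c := lt_of_le_of_ne hcnn (Ne.symm hcne)
      set y₀ : EuclideanSpace ℝ (Fin n) := a - c • b with hy₀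
      have hy0norm : ‖y₀‖ = c := hnorm
      have hy0ne : y₀ ≠ 0 := by
        intro h
        rw [h, norm_zero] at hy0norm
        exact hcne hy0norm.symm
      refine ⟨y₀, hy0ne, ?_⟩
      have hFy0 := Fpos y₀ hy0ne
      have hinner : (inner ℝ a y₀ : ℝ) = c * F y₀ := by
        have ha' : a = y₀ + c • b := by rw [hy₀]; abel
        have : (inner ℝ a y₀ : ℝ) = (inner ℝ y₀ y₀ : ℝ) + c * (inner ℝ b y₀ : ℝ) := by
          conv_lhs => rw [ha']
          rw [inner_add_left, real_inner_smul_left]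
        rw [this, real_inner_self_eq_norm_sq, hy0norm, hF, hy0norm]
        ring
      rw [hinner, mul_div_assoc, div_self (ne_of_gt hFy0), mul_one]
  exact ⟨hub, fun u hu => hu hmem⟩
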